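/- arXiv:math/0210387 — 3 statements merged into one kernel-verified Lean document; each statement's English description precedes it below -/
import Mathlib

section
/- Coweakening w↑ is derivable in the system with switch, weakening w↓, and generic cut i↑: for any context S{ } and structure R, from S{R} one can derive S{t} using only these rules and the structural equivalence. Concretely, S{R} = S(R,[t,f]) derives S[t,(R,f)] by switch, then S[t,(R,¬R)] by w↓, then S{t} by i↑. -/
/-- Structures of system SKS. -/
inductive Str : Type
  | f : Str
  | t : Str
  | atom (n : ℕ) : Str
  | or (A B : Str) : Str
  | and (A B : Str) : Str
  | neg (A : Str) : Str

/-- Positive contexts: a structure with one hole, not under a negation. -/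
inductive Ctx : Type
  | hole : Ctx
  | orl (S : Ctx) (T : Str) : Ctx
  | orr (T : Str) (S : Ctx) : Ctx
  | andl (S : Ctx) (T : Str) : Ctx
  | andr (T : Str) (S : Ctx) : Ctx

def Ctx.fill : Ctx → Str → Str
  | .hole, R => R
  | .orl S T, R => .or (S.fill R) T
  | .orr T S, R => .or T (S.fill R)
  | .andl S T, R => .and (S.fill R) T
  | .andr T S, R => .and T (S.fill R)

/-- Structural equivalence `=` of SKS. -/
inductive equiv : Str → Str → Prop
  | refl (R) : equiv R R
  | symm {A B} : equiv A B → equiv B A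
  | trans {A B C} : equiv A B → equiv B C → equiv A C
  | or_congr {A B C D} : equiv A B → equiv C D → equiv (.or A C) (.or B D)
  | and_congr {A B C D} : equiv A B → equiv C D → equiv (.and A C) (.and B D)
  | neg_congr {A B} : equiv A B → equiv (.neg A) (.neg B)
  | or_assoc (A B C) : equiv (.or (.or A B) C) (.or A (.or B C))
  | or_comm (A B) : equiv (.or A B) (.or B A)
  | and_assoc (A B C) : equiv (.and (.and A B) C) (.and A (.and B C))
  | and_comm (A B) : equiv (.and A B) (.and B A)
  | dm_or (A B) : equiv (.neg (.or A B)) (.and (.neg A) (.neg B))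
  | dm_and (A B) : equiv (.neg (.and A B)) (.or (.neg A) (.neg B))
  | neg_neg (A) : equiv (.neg (.neg A)) A
  | neg_f : equiv (.neg .f) .t
  | neg_t : equiv (.neg .t) .f
  | or_f (R) : equiv (.or .f R) R
  | and_t (R) : equiv (.and .t R) R
  | or_t_t : equiv (.or .t .t) .t
  | and_f_f : equiv (.and .f .f) .f

/-- Steps using only switch, weakening and generic cut. -/
inductive stepW : Str → Str → Prop
  | s (S : Ctx) (R U T : Str) :
      stepW (S.fill (.and (.or R U) T)) (S.fill (.or (.and R T) U))
  | w_down (S : Ctx) (R : Str) : stepW (S.fill .f) (S.fill R)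
  | i_up (S : Ctx) (R : Str) : stepW (S.fill (.and R (.neg R))) (S.fill .f)

inductive derivW : Str → Str → Prop
  | refl (R) : derivW R R
  | step {A B C} : stepW A B → derivW B C → derivW A C
  | eq {A B C} : equiv A B → derivW B C → derivW A C

def Ctx.comp : Ctx → Ctx → Ctx
  | .hole, D => D
  | .orl S T, D => .orl (S.comp D) T
  | .orr T S, D => .orr T (S.comp D)
  | .andl S T, D => .andl (S.comp D) T
  | .andr T S, D => .andr T (S.comp D)

theorem Ctx.fill_comp (S D : Ctx) (R : Str) :
    (S.comp D).fill R = S.fill (D.fill R) := by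
  induction S <;> simp [Ctx.comp, Ctx.fill, *]

theorem fill_congr (S : Ctx) {A B : Str} (h : equiv A B) :
    equiv (S.fill A) (S.fill B) := by
  induction S <;> simp [Ctx.fill] <;>
    first
      | exact h
      | exact equiv.or_congr (by assumption) (equiv.refl _)
      | exact equiv.or_congr (equiv.refl _) (by assumption)
      | exact equiv.and_congr (by assumption) (equiv.refl _)
      | exact equiv.and_congr (equiv.refl _) (by assumption)

/-- coweakening `w↑` is derivable from switch, weakening and generic cut. -/
theorem coweakening_derivable (S : Ctx) (R : Str) :
    derivW (S.fill R) (S.fill .t) := by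
  have e1 : equiv (S.fill R) (S.fill (.and (.or .f .t) R)) :=
    fill_congr S ((equiv.and_t R).symm.trans
      (equiv.and_congr (equiv.or_f Str.t).symm (equiv.refl R)))
  refine derivW.eq e1 (derivW.step (stepW.s S .f .t R) ?_)
  have hw := stepW.w_down (S.comp (.orl (.andl .hole R) .t)) (Str.neg R)
  rw [Ctx.fill_comp, Ctx.fill_comp] at hw
  refine derivW.step hw ?_
  refine derivW.eq (fill_congr S (equiv.or_congr (equiv.and_comm _ _) (equiv.refl _))) ?_
  have hi := stepW.i_up (S.comp (.orl .hole .t)) R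
  rw [Ctx.fill_comp, Ctx.fill_comp] at hi
  exact derivW.step hi (derivW.eq (fill_congr S (equiv.or_f Str.t)) (derivW.refl _))
end

section
/- Atom substitution preserves derivability: if there is a derivation from structure P to structure Q in SKS, then replacing every occurrence of a fixed atom a by t and every occurrence of ¬a by f throughout the derivation yields a derivation from P[a↦t, ¬a↦f] to Q[a↦t, ¬a↦f]. Each rule instance either remains a valid instance or becomes an instance of the structural equivalence (e.g., ai↓ on atom a becomes S{t} = S[t,f], and ai↑ on atom a becomes S(t,f) = S{f}). -/
/-- One inference step of SKS, applied in an arbitrary positive context. -/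
inductive step : Str → Str → Prop
  | ai_down (S : Ctx) (a : ℕ) :
      step (S.fill .t) (S.fill (.or (.atom a) (.neg (.atom a))))
  | ai_up (S : Ctx) (a : ℕ) :
      step (S.fill (.and (.atom a) (.neg (.atom a)))) (S.fill .f)
  | s (S : Ctx) (R U T : Str) :
      step (S.fill (.and (.or R U) T)) (S.fill (.or (.and R T) U))
  | c_down (S : Ctx) (R : Str) : step (S.fill (.or R R)) (S.fill R)
  | c_up (S : Ctx) (R : Str) : step (S.fill R) (S.fill (.and R R))
  | w_down (S : Ctx) (R : Str) : step (S.fill .f) (S.fill R)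
  | w_up (S : Ctx) (R : Str) : step (S.fill R) (S.fill .t)

/-- Derivations in SKS: chains of rule instances and equivalence steps. -/
inductive Deriv : Str → Str → Prop
  | refl (R) : Deriv R R
  | step {A B C} : step A B → Deriv B C → Deriv A C
  | eq {A B C} : equiv A B → Deriv B C → Deriv A C

/-- Substitute the unit `t` for the atom `a` and `f` for its negation `¬a`. -/
def subst (a : ℕ) : Str → Str
  | .f => .f
  | .t => .t
  | .atom n => if n = a then .t else .atom n
  | .or A B => .or (subst a A) (subst a B)
  | .and A B => .and (subst a A) (subst a B)
  | .neg (.atom n) => if n = a then .f else .neg (.atom n)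
  | .neg A => .neg (subst a A)


def Ctx.subst (a : ℕ) : Ctx → Ctx
  | .hole => .hole
  | .orl S T => .orl (S.subst a) (_root_.subst a T)
  | .orr T S => .orr (_root_.subst a T) (S.subst a)
  | .andl S T => .andl (S.subst a) (_root_.subst a T)
  | .andr T S => .andr (_root_.subst a T) (S.subst a)

lemma subst_fill (a : ℕ) (S : Ctx) (R : Str) :
    subst a (S.fill R) = (S.subst a).fill (subst a R) := by
  induction S <;> simp [Ctx.fill, Ctx.subst, subst, *]

lemma equiv_fill {A B : Str} (S : Ctx) (h : equiv A B) :
    equiv (S.fill A) (S.fill B) := by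
  induction S <;>
    simp only [Ctx.fill] <;>
    first
      | exact h
      | exact equiv.or_congr ‹_› (equiv.refl _)
      | exact equiv.or_congr (equiv.refl _) ‹_›
      | exact equiv.and_congr ‹_› (equiv.refl _)
      | exact equiv.and_congr (equiv.refl _) ‹_›

lemma subst_neg (a : ℕ) (A : Str) :
    equiv (subst a (.neg A)) (.neg (subst a A)) := by
  cases A with
  | atom n =>
      by_cases h : n = a <;> simp [subst, h]
      · exact equiv.symm equiv.neg_t
      · exact equiv.refl _
  | _ => exact equiv.refl _

lemma equiv_subst (a : ℕ) {A B : Str} (h : equiv A B) :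
    equiv (subst a A) (subst a B) := by
  induction h with
  | refl R => exact equiv.refl _
  | symm _ ih => exact ih.symm
  | trans _ _ ih1 ih2 => exact ih1.trans ih2
  | or_congr _ _ ih1 ih2 => exact equiv.or_congr ih1 ih2
  | and_congr _ _ ih1 ih2 => exact equiv.and_congr ih1 ih2
  | neg_congr h ih =>
      exact ((subst_neg a _).trans (equiv.neg_congr ih)).trans (subst_neg a _).symm
  | or_assoc A B C => exact equiv.or_assoc _ _ _
  | or_comm A B => exact equiv.or_comm _ _
  | and_assoc A B C => exact equiv.and_assoc _ _ _
  | and_comm A B => exact equiv.and_comm _ _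
  | dm_or A B =>
      exact (equiv.dm_or _ _).trans
        (equiv.and_congr (subst_neg a A).symm (subst_neg a B).symm)
  | dm_and A B =>
      exact (equiv.dm_and _ _).trans
        (equiv.or_congr (subst_neg a A).symm (subst_neg a B).symm)
  | neg_neg A =>
      exact ((equiv.neg_congr (subst_neg a A)).trans (equiv.neg_neg _)).symm.symm.trans
        (equiv.refl _) |>.trans (equiv.refl _)
  | neg_f => exact equiv.neg_f
  | neg_t => exact equiv.neg_t
  | or_f R => exact equiv.or_f _
  | and_t R => exact equiv.and_t _
  | or_t_t => exact equiv.or_t_t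
  | and_f_f => exact equiv.and_f_f

lemma step_subst (a : ℕ) {A B : Str} (h : step A B) :
    Deriv (subst a A) (subst a B) := by
  cases h with
  | ai_down S b =>
      rw [subst_fill, subst_fill]
      by_cases hb : b = a
      · subst hb
        refine Deriv.eq (equiv_fill _ ?_) (Deriv.refl _)
        simp only [subst, if_pos rfl]
        exact (equiv.or_f .t).symm.trans (equiv.or_comm _ _)
      · simp only [subst, if_neg hb]
        exact Deriv.step (step.ai_down _ b) (Deriv.refl _)
  | ai_up S b =>
      rw [subst_fill, subst_fill]
      by_cases hb : b = a
      · subst hb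
        refine Deriv.eq (equiv_fill _ ?_) (Deriv.refl _)
        simp only [subst, if_pos rfl]
        exact equiv.and_t _
      · simp only [subst, if_neg hb]
        exact Deriv.step (step.ai_up _ b) (Deriv.refl _)
  | s S R U T =>
      rw [subst_fill, subst_fill]
      exact Deriv.step (step.s _ _ _ _) (Deriv.refl _)
  | c_down S R =>
      rw [subst_fill, subst_fill]
      exact Deriv.step (step.c_down _ _) (Deriv.refl _)
  | c_up S R =>
      rw [subst_fill, subst_fill]
      exact Deriv.step (step.c_up _ _) (Deriv.refl _)
  | w_down S R =>
      rw [subst_fill, subst_fill]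
      exact Deriv.step (step.w_down _ _) (Deriv.refl _)
  | w_up S R =>
      rw [subst_fill, subst_fill]
      exact Deriv.step (step.w_up _ _) (Deriv.refl _)

lemma deriv_trans {A B C : Str} (h1 : Deriv A B) (h2 : Deriv B C) : Deriv A C := by
  induction h1 with
  | refl => exact h2
  | step s _ ih => exact Deriv.step s (ih h2)
  | eq e _ ih => exact Deriv.eq e (ih h2)

/-- atom substitution `[a↦t, ¬a↦f]` preserves derivability. -/
theorem subst_preserves_deriv (a : ℕ) (P Q : Str) (h : Deriv P Q) :
    Deriv (subst a P) (subst a Q) := by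
  induction h with
  | refl => exact Deriv.refl _
  | step s _ ih => exact deriv_trans (step_subst a s) ih
  | eq e _ ih => exact Deriv.eq (equiv_subst a e) ih
end

section
/- No rule of SKS, applied to a boolean structure, has a premise equivalent to t and a conclusion equivalent to f: for each of the rules s, c↓, c↑, w↓ (and the degenerate interaction rules on units), if the premise is a boolean structure equal to t under =, then the conclusion is also equal to t. -/
/-- Boolean structures: built only from `f` and `t` by `[·,·]` and `(·,·)`. -/
def isBoolean : Str → Prop
  | .f => True
  | .t => True
  | .or A B => isBoolean A ∧ isBoolean B
  | .and A B => isBoolean A ∧ isBoolean B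
  | _ => False

def evalS : Str → Bool
  | .f => false
  | .t => true
  | .atom _ => true
  | .or A B => evalS A || evalS B
  | .and A B => evalS A && evalS B
  | .neg A => !(evalS A)

theorem equiv_eval {A B : Str} (h : equiv A B) : evalS A = evalS B := by
  induction h <;> simp_all [evalS] <;>
    first
    | exact Bool.or_assoc ..
    | exact Bool.or_comm ..
    | exact Bool.and_assoc ..
    | exact Bool.and_comm ..

theorem fill_mono (S : Ctx) {x y : Str} (h : evalS x = true → evalS y = true) :
    evalS (S.fill x) = true → evalS (S.fill y) = true := by
  induction S <;> simp_all [Ctx.fill, evalS] <;> tauto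

theorem fill_bool (S : Ctx) {x : Str} (h : isBoolean (S.fill x)) : isBoolean x := by
  induction S <;> simp_all [Ctx.fill, isBoolean]

theorem bool_equiv {B : Str} (hB : isBoolean B) :
    equiv B (if evalS B then Str.t else Str.f) := by
  induction B with
  | f => exact .refl _
  | t => exact .refl _
  | atom n => exact absurd hB (by simp [isBoolean])
  | neg A ih => exact absurd hB (by simp [isBoolean])
  | or A B ihA ihB =>
    obtain ⟨hA, hB⟩ := hB
    refine .trans (.or_congr (ihA hA) (ihB hB)) ?_
    cases hv : evalS A <;> cases hw : evalS B <;> simp [evalS, hv, hw]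
    · exact .or_f _
    · exact .or_f _
    · exact .trans (.or_comm _ _) (.or_f _)
    · exact .or_t_t
  | and A B ihA ihB =>
    obtain ⟨hA, hB⟩ := hB
    refine .trans (.and_congr (ihA hA) (ihB hB)) ?_
    cases hv : evalS A <;> cases hw : evalS B <;> simp [evalS, hv, hw]
    · exact .and_f_f
    · exact .trans (.and_comm _ _) (.and_t _)
    · exact .and_t _
    · exact .and_t _

/-- no rule of SKS, applied to boolean structures, has premise
equal to `t` and conclusion equal to `f`: if the premise is a boolean structure
equal to `t` under `=`, the conclusion (also boolean) is equal to `t`. -/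
theorem rules_truth_preserving_on_booleans (A B : Str) (h : step A B)
    (hA : isBoolean A) (hB : isBoolean B) (ht : equiv A .t) : equiv B .t := by
  have hAe : evalS A = true := by simpa [evalS] using equiv_eval ht
  have hBe : evalS B = true := by
    cases h with
    | ai_down S a => exact absurd (fill_bool S hB) (by simp [isBoolean])
    | ai_up S a => exact absurd (fill_bool S hA) (by simp [isBoolean])
    | s S R U T =>
      refine fill_mono S (fun hx => ?_) hAe
      simp [evalS] at hx ⊢; tauto
    | c_down S R =>
      refine fill_mono S (fun hx => ?_) hAe
      simp [evalS] at hx ⊢; tauto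
    | c_up S R =>
      refine fill_mono S (fun hx => ?_) hAe
      simp [evalS] at hx ⊢; tauto
    | w_down S R =>
      refine fill_mono S (fun hx => ?_) hAe
      simp [evalS] at hx
    | w_up S R =>
      refine fill_mono S (fun hx => ?_) hAe
      simp [evalS]
  have := bool_equiv hB
  rwa [hBe] at this
end
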